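/- If f : I → ℝ is convex on an interval I ⊆ ℝ and a, b ∈ I with a < b, then f((a+b)/2) ≤ (1/(b-a)) ∫_a^b f(x) dx ≤ (f(a)+f(b))/2 (Hermite–Hadamard inequality). -/

import Mathlib

open MeasureTheory Set

theorem hermite_hadamard
    (I : Set ℝ) (f : ℝ → ℝ) (hf : ConvexOn ℝ I f)
    (a b : ℝ) (ha : a ∈ I) (hb : b ∈ I) (hab : a < b)
    (hint : IntervalIntegrable f volume a b) :
    f ((a + b) / 2) ≤ (1 / (b - a)) * ∫ x in a..b, f x ∧
      (1 / (b - a)) * ∫ x in a..b, f x ≤ (f a + f b) / 2 := by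
  have hba : (0:ℝ) < b - a := by linarith
  have hIcc : Icc a b ⊆ I := by
    intro x hx
    have := hf.1.segment_subset ha hb
    rw [segment_eq_Icc hab.le] at this
    exact this hx
  have hrefl : IntervalIntegrable (fun x => f (a + b - x)) volume a b := by
    have := hint.comp_sub_left (a + b)
    simpa using this.symm
  constructor
  · -- left inequality
    have hpt : ∀ x ∈ Icc a b, f ((a + b) / 2) ≤ ((f x + f (a + b - x)) / 2) := by
      intro x hx
      have hx1 : x ∈ I := hIcc hx
      have hx2 : (a + b - x) ∈ I := hIcc ⟨by linarith [hx.2], by linarith [hx.1]⟩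
      have h := hf.2 hx1 hx2 (by norm_num : (0:ℝ) ≤ 1/2) (by norm_num : (0:ℝ) ≤ 1/2)
        (by norm_num)
      simp only [smul_eq_mul] at h
      have heq : (1/2 : ℝ) * x + (1/2 : ℝ) * (a + b - x) = (a + b) / 2 := by ring
      rw [heq] at h
      linarith
    have hmono : (∫ _x in a..b, f ((a + b) / 2)) ≤
        ∫ x in a..b, (f x + f (a + b - x)) / 2 :=
      intervalIntegral.integral_mono_on hab.le (intervalIntegrable_const)
        ((hint.add hrefl).div_const 2) hpt
    have hrint : (∫ x in a..b, f (a + b - x)) = ∫ x in a..b, f x := by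
      have := intervalIntegral.integral_comp_sub_left f (a + b) (a := a) (b := b)
      simpa using this
    rw [intervalIntegral.integral_const, intervalIntegral.integral_div,
      intervalIntegral.integral_add hint hrefl, hrint, smul_eq_mul] at hmono
    rw [one_div]
    have h2 : (b - a) * f ((a + b) / 2) ≤ ∫ x in a..b, f x := by linarith
    have := mul_le_mul_of_nonneg_left h2 (le_of_lt (inv_pos.mpr hba))
    rw [← mul_assoc, inv_mul_cancel₀ (ne_of_gt hba), one_mul] at this
    exact this
  · -- right inequality
    have hpt : ∀ x ∈ Icc a b, f x ≤ ((b - x) * f a + (x - a) * f b) / (b - a) := by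
      intro x hx
      have h1 : (0:ℝ) ≤ (b - x) / (b - a) := div_nonneg (by linarith [hx.2]) hba.le
      have h2 : (0:ℝ) ≤ (x - a) / (b - a) := div_nonneg (by linarith [hx.1]) hba.le
      have h3 : (b - x) / (b - a) + (x - a) / (b - a) = 1 := by field_simp; ring
      have h := hf.2 ha hb h1 h2 h3
      simp only [smul_eq_mul] at h
      have heq : (b - x) / (b - a) * a + (x - a) / (b - a) * b = x := by
        field_simp; ring
      rw [heq] at h
      calc f x ≤ (b - x) / (b - a) * f a + (x - a) / (b - a) * f b := h
        _ = ((b - x) * f a + (x - a) * f b) / (b - a) := by ring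
    have hcont : IntervalIntegrable (fun x => ((b - x) * f a + (x - a) * f b) / (b - a))
        volume a b := by
      apply Continuous.intervalIntegrable
      continuity
    have hmono : (∫ x in a..b, f x) ≤
        ∫ x in a..b, ((b - x) * f a + (x - a) * f b) / (b - a) :=
      intervalIntegral.integral_mono_on hab.le hint hcont hpt
    have hval : (∫ x in a..b, ((b - x) * f a + (x - a) * f b) / (b - a))
        = (b - a) * ((f a + f b) / 2) := by
      have heq : (fun x => ((b - x) * f a + (x - a) * f b) / (b - a))
          = fun x => x * ((f b - f a) / (b - a)) + (b * f a - a * f b) / (b - a) := by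
        funext x; field_simp; ring
      rw [heq, intervalIntegral.integral_add
        (by apply Continuous.intervalIntegrable; continuity)
        intervalIntegrable_const,
        intervalIntegral.integral_mul_const, integral_id,
        intervalIntegral.integral_const, smul_eq_mul]
      field_simp
      ring
    rw [hval] at hmono
    rw [one_div]
    have := mul_le_mul_of_nonneg_left hmono (le_of_lt (inv_pos.mpr hba))
    rw [← mul_assoc, inv_mul_cancel₀ (ne_of_gt hba), one_mul] at this
    exact this
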